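/- There is a constant C > 0 such that for every positive integer n, every ω ∈ Ω, every 0 ≤ k ≤ n−1 and every t ∈ [k/n, (k+1)/n), one has | ∫_0^t ( ∫_0^s e^{2πi H_n(ω,u)} du ) ds − (i/(2πn²)) S_k(ω) | ≤ C/n². That is, the iterated integral ∫_0^t ∫_0^s e^{2πi H_n(ω,u)} du ds equals (i/(2πn²)) S_{⌊nt⌋}(ω) up to an error of order 1/n² uniformly in t and ω. -/

import Mathlib

open MeasureTheory Real

private lemma aux_exp_shift (c : ℂ) (hc : c ≠ 0) (a b : ℝ) :
    (∫ u in a..b, Complex.exp (c * ((u : ℂ) - (a : ℂ)))) =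
      (Complex.exp (c * ((b : ℂ) - (a : ℂ))) - 1) / c := by
  have h : ∀ u : ℝ, Complex.exp (c * ((u : ℂ) - (a : ℂ)))
      = Complex.exp (c * u) * Complex.exp (-(c * a)) := by
    intro u; rw [← Complex.exp_add]; ring_nf
  simp_rw [h]
  rw [intervalIntegral.integral_mul_const, integral_exp_mul_complex hc]
  have e1 : Complex.exp (c * (b : ℂ)) * Complex.exp (-(c * (a : ℂ)))
      = Complex.exp (c * ((b : ℂ) - (a : ℂ))) := by
    rw [← Complex.exp_add]; congr 1; ring
  have e2 : Complex.exp (c * (a : ℂ)) * Complex.exp (-(c * (a : ℂ))) = 1 := by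
    rw [← Complex.exp_add, add_neg_cancel, Complex.exp_zero]
  rw [div_mul_eq_mul_div, sub_mul, e1, e2]

private lemma aux_exp_shift2 (c : ℂ) (hc : c ≠ 0) (a b : ℝ) :
    (∫ s in a..b, (Complex.exp (c * ((s : ℂ) - (a : ℂ))) - 1) / c) =
      ((Complex.exp (c * ((b : ℂ) - (a : ℂ))) - 1) / c - ((b : ℂ) - (a : ℂ))) / c := by
  have hcont : Continuous (fun s : ℝ => Complex.exp (c * ((s : ℂ) - (a : ℂ)))) := by
    fun_prop
  rw [intervalIntegral.integral_div,
    intervalIntegral.integral_sub (hcont.intervalIntegrable a b) intervalIntegrable_const,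
    aux_exp_shift c hc, intervalIntegral.integral_const]
  norm_num [Complex.real_smul]

/-- There is a constant `C > 0` such that for all `n ≥ 1`, `ω`, `0 ≤ k ≤ n−1`
and `t ∈ [k/n, (k+1)/n)`,
`|∫_0^t (∫_0^s e^{2πiH_n(ω,u)} du) ds − (i/(2πn²)) S_k(ω)| ≤ C/n²`. -/
theorem iterated_exp_integral_random_walk
    {Ω : Type*} [MeasurableSpace Ω] (P : MeasureTheory.Measure Ω)
    [MeasureTheory.IsProbabilityMeasure P]
    (X : ℕ → Ω → ℝ) (hXmeas : ∀ k, Measurable (X k))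
    (hiid : ProbabilityTheory.iIndepFun X P)
    (hdist : ∀ k, P {ω | X k ω = 1} = 1/2 ∧ P {ω | X k ω = -1} = 1/2)
    (hpm : ∀ k ω, X k ω = 1 ∨ X k ω = -1)
    (H : ℕ → Ω → ℝ → ℝ)
    (hH : ∀ n : ℕ, 1 ≤ n → ∀ (ω : Ω) (k : ℕ), k ≤ n - 1 → ∀ u : ℝ,
      (k : ℝ) / n ≤ u → u ≤ ((k : ℝ) + 1) / n →
      H n ω u = (∑ i ∈ Finset.range k, X (i + 1) ω) + n * X (k + 1) ω * (u - (k : ℝ) / n))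
    :
    ∃ C : ℝ, 0 < C ∧ ∀ (n : ℕ), 1 ≤ n → ∀ (ω : Ω) (k : ℕ), k ≤ n - 1 → ∀ t : ℝ,
      (k : ℝ) / n ≤ t → t < ((k : ℝ) + 1) / n →
      ‖
        ((∫ s in (0:ℝ)..t, (∫ u in (0:ℝ)..s, Complex.exp (2 * π * Complex.I * H n ω u))) -
          Complex.I * (((∑ i ∈ Finset.range k, X (i + 1) ω) / (2 * π * n ^ 2) : ℝ) : ℂ))‖ ≤
      C / n ^ 2 := by
  refine ⟨1, one_pos, ?_⟩
  intro n hn ω k hk t ht1 ht2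
  have hkn : k < n := by omega
  have hn0 : (0:ℝ) < n := by exact_mod_cast hn
  have hnC : (n:ℂ) ≠ 0 := by exact_mod_cast hn0.ne'
  set f : ℝ → ℂ := fun u => Complex.exp (2 * π * Complex.I * H n ω u) with hf
  set a : ℕ → ℝ := fun j => (j : ℝ) / n with ha
  set ε : ℕ → ℝ := fun j => X (j + 1) ω with hε
  set c : ℕ → ℂ := fun j => 2 * (π:ℂ) * (n:ℂ) * (ε j : ℂ) * Complex.I with hc
  have hεpm : ∀ j, ε j = 1 ∨ ε j = -1 := fun j => hpm (j + 1) ω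
  have hcne : ∀ j, c j ≠ 0 := by
    intro j
    rcases hεpm j with h | h <;>
      simp [hc, h, Real.pi_ne_zero, hnC, Complex.I_ne_zero, Complex.ofReal_ne_zero]
  have hamono : ∀ j : ℕ, a j ≤ a (j + 1) := by
    intro j
    show (j : ℝ) / n ≤ ((j + 1 : ℕ) : ℝ) / n
    gcongr
    push_cast; linarith
  have hdiff : ∀ j : ℕ, ((a (j + 1) : ℂ) - (a j : ℂ)) = 1 / (n : ℂ) := by
    intro j
    simp only [ha]
    push_cast
    field_simp
    ring
  have hSint : ∀ j : ℕ, ∃ m : ℤ, (∑ i ∈ Finset.range j, X (i + 1) ω) = (m : ℝ) := by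
    intro j
    induction j with
    | zero => exact ⟨0, by simp⟩
    | succ j ih =>
      obtain ⟨m, hm⟩ := ih
      rcases hpm (j + 1) ω with h | h
      · exact ⟨m + 1, by rw [Finset.sum_range_succ, hm, h]; push_cast; ring⟩
      · exact ⟨m - 1, by rw [Finset.sum_range_succ, hm, h]; push_cast; ring⟩
  -- pointwise identity for the integrand on each subinterval
  have hfe : ∀ j : ℕ, j < n → ∀ u ∈ Set.Icc (a j) (a (j + 1)),
      f u = Complex.exp (c j * ((u : ℂ) - (a j : ℂ))) := by
    intro j hj u hu
    have hj' : j ≤ n - 1 := by omega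
    have hu1 : (j : ℝ) / n ≤ u := hu.1
    have hu2 : u ≤ ((j : ℝ) + 1) / n := by
      have := hu.2
      simp only [ha] at this
      push_cast at this
      linarith
    show Complex.exp (2 * π * Complex.I * H n ω u) = _
    rw [hH n hn ω j hj' u hu1 hu2]
    obtain ⟨m, hm⟩ := hSint j
    rw [hm]
    push_cast
    rw [mul_add, Complex.exp_add]
    have h1 : Complex.exp (2 * (π:ℂ) * Complex.I * (m : ℂ)) = 1 := by
      rw [show (2 * (π:ℂ) * Complex.I * (m : ℂ)) = (m : ℂ) * (2 * π * Complex.I) by ring]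
      exact Complex.exp_int_mul_two_pi_mul_I m
    rw [h1, one_mul]
    congr 1
    simp only [hc, ha, hε]
    push_cast
    ring
  have hexp1 : ∀ j : ℕ, Complex.exp (c j * (1 / (n:ℂ))) = 1 := by
    intro j
    rcases hεpm j with h | h
    · have : c j * (1 / (n:ℂ)) = ((1 : ℤ) : ℂ) * (2 * π * Complex.I) := by
        simp only [hc, h]
        push_cast
        field_simp
      rw [this]; exact Complex.exp_int_mul_two_pi_mul_I 1
    · have : c j * (1 / (n:ℂ)) = ((-1 : ℤ) : ℂ) * (2 * π * Complex.I) := by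
        simp only [hc, h]
        push_cast
        field_simp
      rw [this]; exact Complex.exp_int_mul_two_pi_mul_I (-1)
  -- continuity / integrability of f on pieces
  have hfc : ∀ j : ℕ, j < n → ContinuousOn f (Set.Icc (a j) (a (j + 1))) := by
    intro j hj
    have hcont : Continuous (fun u : ℝ => Complex.exp (c j * ((u : ℂ) - (a j : ℂ)))) := by
      fun_prop
    exact hcont.continuousOn.congr (fun u hu => hfe j hj u hu)
  have hfi : ∀ j : ℕ, j < n → IntervalIntegrable f volume (a j) (a (j + 1)) :=
    fun j hj => (hfc j hj).intervalIntegrable_of_Icc (hamono j)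
  -- integral of f from 0 to grid points vanishes; also integrability up to grid points
  have key : ∀ m : ℕ, m ≤ n →
      IntervalIntegrable f volume (a 0) (a m) ∧ (∫ u in (a 0)..(a m), f u) = 0 := by
    intro m hm
    induction m with
    | zero => exact ⟨by simp, by simp⟩
    | succ m ih =>
      have hm' : m < n := by omega
      obtain ⟨ih1, ih2⟩ := ih (le_of_lt hm')
      have hpiece : (∫ u in (a m)..(a (m + 1)), f u) = 0 := by
        rw [intervalIntegral.integral_congr (g := fun u : ℝ =>
            Complex.exp (c m * ((u : ℂ) - (a m : ℂ))))
          (by rw [Set.uIcc_of_le (hamono m)]; exact fun u hu => hfe m hm' u hu)]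
        rw [aux_exp_shift (c m) (hcne m), hdiff m, hexp1 m, sub_self, zero_div]
      refine ⟨ih1.trans (hfi m hm'), ?_⟩
      rw [← intervalIntegral.integral_add_adjacent_intervals ih1 (hfi m hm'), ih2, hpiece,
        add_zero]
  have ha0 : a 0 = 0 := by simp [ha]
  -- inner integral formula
  have hgs : ∀ j : ℕ, j < n → ∀ s ∈ Set.Icc (a j) (a (j + 1)),
      (∫ u in (0:ℝ)..s, f u) = (Complex.exp (c j * ((s : ℂ) - (a j : ℂ))) - 1) / c j := by
    intro j hj s hs
    have hsub : Set.Icc (a j) s ⊆ Set.Icc (a j) (a (j + 1)) :=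
      Set.Icc_subset_Icc le_rfl hs.2
    have hint2 : IntervalIntegrable f volume (a j) s :=
      ((hfc j hj).mono hsub).intervalIntegrable_of_Icc hs.1
    rw [← ha0, ← intervalIntegral.integral_add_adjacent_intervals (key j (le_of_lt hj)).1 hint2,
      (key j (le_of_lt hj)).2, zero_add]
    rw [intervalIntegral.integral_congr (g := fun u : ℝ =>
        Complex.exp (c j * ((u : ℂ) - (a j : ℂ))))
      (by rw [Set.uIcc_of_le hs.1]; exact fun u hu => hfe j hj u (hsub hu))]
    exact aux_exp_shift (c j) (hcne j) (a j) s
  set G : ℝ → ℂ := fun s => ∫ u in (0:ℝ)..s, f u with hG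
  have hGc : ∀ j : ℕ, j < n → ContinuousOn G (Set.Icc (a j) (a (j + 1))) := by
    intro j hj
    have hcont : Continuous (fun s : ℝ =>
        (Complex.exp (c j * ((s : ℂ) - (a j : ℂ))) - 1) / c j) := by fun_prop
    exact hcont.continuousOn.congr (fun s hs => hgs j hj s hs)
  have hGi : ∀ j : ℕ, j < n → IntervalIntegrable G volume (a j) (a (j + 1)) :=
    fun j hj => (hGc j hj).intervalIntegrable_of_Icc (hamono j)
  have houter : ∀ j : ℕ, j < n →
      (∫ s in (a j)..(a (j + 1)), G s) = Complex.I * ((ε j / (2 * π * n ^ 2) : ℝ) : ℂ) := by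
    intro j hj
    rw [intervalIntegral.integral_congr (g := fun s : ℝ =>
        (Complex.exp (c j * ((s : ℂ) - (a j : ℂ))) - 1) / c j)
      (by rw [Set.uIcc_of_le (hamono j)]; exact fun s hs => hgs j hj s hs)]
    rw [aux_exp_shift2 (c j) (hcne j), hdiff j, hexp1 j, sub_self, zero_div, zero_sub]
    have hπ : ((π : ℝ) : ℂ) ≠ 0 := by
      exact_mod_cast Real.pi_ne_zero
    rcases hεpm j with h | h <;>
    · simp only [hc, h]
      push_cast
      rw [div_eq_iff (by simp [hπ, hnC, Complex.I_ne_zero])]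
      field_simp
      ring_nf
      simp [Complex.I_sq]
  have hak1 : ((k : ℝ) + 1) / n = a (k + 1) := by simp only [ha]; push_cast; ring
  have htle : t ≤ a (k + 1) := by rw [← hak1]; exact le_of_lt ht2
  have hsum : (∫ s in (a 0)..(a k), G s)
      = Complex.I * (((∑ i ∈ Finset.range k, ε i) / (2 * π * n ^ 2) : ℝ) : ℂ) := by
    rw [← intervalIntegral.sum_integral_adjacent_intervals
      (fun j (hj : j < k) => hGi j (by omega))]
    rw [Finset.sum_congr rfl (fun j hj => houter j
      (by have := Finset.mem_range.mp hj; omega))]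
    rw [← Finset.mul_sum]
    congr 1
    push_cast
    rw [Finset.sum_div]
  have hGik : IntervalIntegrable G volume (a 0) (a k) :=
    IntervalIntegrable.trans_iterate (fun j hj => hGi j (by omega))
  have hGt : IntervalIntegrable G volume (a k) t :=
    ((hGc k hkn).mono (Set.Icc_subset_Icc le_rfl htle)).intervalIntegrable_of_Icc ht1
  have hmain : (∫ s in (0:ℝ)..t, G s)
      = Complex.I * (((∑ i ∈ Finset.range k, ε i) / (2 * π * n ^ 2) : ℝ) : ℂ)
        + ∫ s in (a k)..t, G s := by
    rw [← hsum, ← ha0]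
    exact (intervalIntegral.integral_add_adjacent_intervals hGik hGt).symm
  rw [hmain, add_sub_cancel_left]
  -- pointwise bound on G
  have hcabs : ‖c k‖ = 2 * π * n := by
    rcases hεpm k with h | h <;>
    · simp only [hc, h]
      push_cast
      simp [norm_mul, Complex.norm_real, Complex.norm_I,
        abs_of_pos Real.pi_pos, abs_of_pos hn0]
  have hb : ∀ s ∈ Set.uIoc (a k) t, ‖G s‖ ≤ 1 / (π * n) := by
    intro s hs
    rw [Set.uIoc_of_le ht1] at hs
    have hs' : s ∈ Set.Icc (a k) (a (k + 1)) := ⟨le_of_lt hs.1, hs.2.trans htle⟩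
    show ‖∫ u in (0:ℝ)..s, f u‖ ≤ 1 / (π * n)
    rw [hgs k hkn s hs', norm_div, hcabs]
    have hone : ‖Complex.exp (c k * ((s : ℂ) - (a k : ℂ)))‖ = 1 := by
      have hrw : c k * ((s : ℂ) - (a k : ℂ))
          = ((2 * π * n * ε k * (s - a k) : ℝ) : ℂ) * Complex.I := by
        simp only [hc]; push_cast; ring
      rw [hrw, Complex.norm_exp_ofReal_mul_I]
    have hnum : ‖Complex.exp (c k * ((s : ℂ) - (a k : ℂ))) - 1‖ ≤ 2 := by
      calc ‖Complex.exp (c k * ((s : ℂ) - (a k : ℂ))) - 1‖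
          ≤ ‖Complex.exp (c k * ((s : ℂ) - (a k : ℂ)))‖ + ‖(1 : ℂ)‖ := norm_sub_le _ _
        _ = 2 := by rw [hone, norm_one]; norm_num
    have hπn : (0:ℝ) < π * n := by positivity
    calc ‖Complex.exp (c k * ((s : ℂ) - (a k : ℂ))) - 1‖ / (2 * π * n)
        ≤ 2 / (2 * π * n) := by gcongr
      _ = 1 / (π * n) := by rw [one_div]; field_simp
  have hbound := intervalIntegral.norm_integral_le_of_norm_le_const hb
  refine hbound.trans ?_
  have h1 : |t - a k| ≤ 1 / n := by
    rw [abs_of_nonneg (sub_nonneg.mpr ht1)]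
    have : t < a k + 1 / n := by
      have : ((k : ℝ) + 1) / n = a k + 1 / n := by
        simp only [ha]; field_simp
      linarith [ht2.trans_le this.le]
    linarith
  have hπ1 : (1:ℝ) ≤ π := by linarith [Real.pi_gt_three]
  calc (1 / (π * n)) * |t - a k| ≤ (1 / (1 * n)) * (1 / n) := by
        gcongr
      _ = 1 / (n:ℝ) ^ 2 := by ring
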